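/- Let g be a Lie algebra with invariant symmetric form ⟨,⟩ and R a commutative C-algebra. Then the vector space (g ⊗ R) ⊕ Ω¹_{R/C}/dR with bracket [J⊗r + ω, J'⊗s + ω'] = [J,J']⊗rs + class(⟨J,J'⟩ r ds) is a Lie algebra, and it is a central extension of g⊗R by Ω¹_{R/C}/dR. -/

import Mathlib

/-!
STATEMENT 3: Let `g` be a Lie algebra with invariant symmetric form and `R` a
commutative ℂ-algebra.  The vector space `(g ⊗ R) ⊕ Ω¹_{R/ℂ}/dR` carries a Lie
bracket given on generators by
`[J⊗r + ω, J'⊗s + ω'] = [J,J']⊗rs + class(⟨J,J'⟩ r ds)`, making it a Lie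
algebra which is a central extension of `g ⊗ R` by `Ω¹_{R/ℂ}/dR` (the central
summand `Ω¹/dR` does not appear in the right-hand side, i.e. it is central).
-/

open TensorProduct

set_option synthInstance.maxHeartbeats 1000000
set_option maxHeartbeats 2000000

section aux

variable (g : Type*) [LieRing g] [LieAlgebra ℂ g]
variable (R : Type*) [CommRing R] [Algebra ℂ R]
variable (B : g →ₗ[ℂ] g →ₗ[ℂ] ℂ)

/-- Quotient `Ω¹_{R/ℂ}/dR`. -/
abbrev QAux := KaehlerDifferential ℂ R ⧸
  LinearMap.range (KaehlerDifferential.D ℂ R).toLinearMap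

/-- `(r, s) ↦ class of r • ds`. -/
noncomputable def phiAux : R →ₗ[ℂ] R →ₗ[ℂ] QAux R :=
  LinearMap.mk₂ ℂ
    (fun r s => Submodule.Quotient.mk (r • KaehlerDifferential.D ℂ R s))
    (fun r r' s => by rw [add_smul]; exact Submodule.Quotient.mk_add _)
    (fun a r s => by rw [smul_assoc]; exact (Submodule.Quotient.mk_smul _ a _))
    (fun r s s' => by rw [map_add, smul_add]; exact Submodule.Quotient.mk_add _)
    (fun a r s => by
      rw [Derivation.map_smul, smul_comm]; exact (Submodule.Quotient.mk_smul _ a _))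

/-- The full cocycle as a map out of the tensor square. -/
noncomputable def totalAux : (R ⊗[ℂ] g) ⊗[ℂ] (R ⊗[ℂ] g) →ₗ[ℂ] QAux R :=
  (TensorProduct.rid ℂ (QAux R)).toLinearMap ∘ₗ
    TensorProduct.map (TensorProduct.lift (phiAux R)) (TensorProduct.lift B) ∘ₗ
      (TensorProduct.tensorTensorTensorComm ℂ R g R g).toLinearMap

/-- The cocycle. -/
noncomputable def cAux : (R ⊗[ℂ] g) →ₗ[ℂ] (R ⊗[ℂ] g) →ₗ[ℂ] QAux R :=
  LinearMap.mk₂ ℂ (fun x y => totalAux g R B (x ⊗ₜ y))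
    (fun x x' y => by rw [add_tmul, map_add])
    (fun a x y => by rw [← smul_tmul', map_smul]  -- 
      )
    (fun x y y' => by rw [tmul_add, map_add])
    (fun a x y => by rw [tmul_smul, map_smul])

theorem cAux_tmul (r s : R) (J J' : g) :
    cAux g R B (r ⊗ₜ J) (s ⊗ₜ J') =
      B J J' • Submodule.Quotient.mk (r • KaehlerDifferential.D ℂ R s) := by
  simp [cAux, totalAux, phiAux]


theorem cAux_skew (hsymm : ∀ X Y : g, B X Y = B Y X) (x y : R ⊗[ℂ] g) :
    cAux g R B x y + cAux g R B y x = 0 := by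
  induction x using TensorProduct.induction_on with
  | zero => simp
  | add x₁ x₂ h1 h2 =>
    simp only [map_add, LinearMap.add_apply] at *
    rw [add_add_add_comm, h1, h2, add_zero]
  | tmul r J =>
    induction y using TensorProduct.induction_on with
    | zero => simp
    | add y₁ y₂ h1 h2 =>
      simp only [map_add, LinearMap.add_apply] at *
      rw [add_add_add_comm, h1, h2, add_zero]
    | tmul s J' =>
      rw [cAux_tmul, cAux_tmul, hsymm J' J, ← smul_add, ← Submodule.Quotient.mk_add]
      have : (Submodule.Quotient.mk (r • KaehlerDifferential.D ℂ R s +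
          s • KaehlerDifferential.D ℂ R r) : QAux R) = 0 :=
        (Submodule.Quotient.mk_eq_zero _).2 ⟨r * s, by simp [Derivation.leibniz]⟩
      rw [this, smul_zero]

theorem cAux_self (hsymm : ∀ X Y : g, B X Y = B Y X) (x : R ⊗[ℂ] g) :
    cAux g R B x x = 0 := by
  have h2 : (2 : ℂ) • cAux g R B x x = 0 := by
    rw [two_smul]; exact cAux_skew g R B hsymm x x
  have : cAux g R B x x = (2 : ℂ)⁻¹ • ((2 : ℂ) • cAux g R B x x) := by
    rw [smul_smul]; norm_num
  rw [this, h2, smul_zero]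

theorem cAux_cocycle (hinv : ∀ X Y Z : g, B ⁅X, Y⁆ Z = B X ⁅Y, Z⁆)
    (x y z : R ⊗[ℂ] g) :
    cAux g R B x ⁅y, z⁆ = cAux g R B ⁅x, y⁆ z + cAux g R B y ⁅x, z⁆ := by
  induction x using TensorProduct.induction_on with
  | zero => simp
  | add x₁ x₂ h1 h2 =>
    simp only [add_lie, map_add, LinearMap.add_apply, h1, h2]; abel
  | tmul r J =>
    induction y using TensorProduct.induction_on with
    | zero => simp
    | add y₁ y₂ h1 h2 =>
      simp only [add_lie, lie_add, map_add, LinearMap.add_apply, h1, h2]; abel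
    | tmul s J' =>
      induction z using TensorProduct.induction_on with
      | zero => simp
      | add z₁ z₂ h1 h2 =>
        simp only [lie_add, map_add, LinearMap.add_apply, h1, h2]; abel
      | tmul t J'' =>
        rw [LieAlgebra.ExtendScalars.bracket_tmul, LieAlgebra.ExtendScalars.bracket_tmul,
          LieAlgebra.ExtendScalars.bracket_tmul, cAux_tmul, cAux_tmul, cAux_tmul,
          ← hinv J J' J'', ← hinv J' J J'']
        have hD : r • KaehlerDifferential.D ℂ R (s * t) +
            s • KaehlerDifferential.D ℂ R (r * t) -
            (r * s) • KaehlerDifferential.D ℂ R t =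
            KaehlerDifferential.D ℂ R (r * (s * t)) := by
          simp only [Derivation.leibniz, smul_add, smul_smul]
          module
        have h0 : (Submodule.Quotient.mk (r • KaehlerDifferential.D ℂ R (s * t)) : QAux R) +
            Submodule.Quotient.mk (s • KaehlerDifferential.D ℂ R (r * t)) -
            Submodule.Quotient.mk ((r * s) • KaehlerDifferential.D ℂ R t) = 0 := by
          rw [← Submodule.Quotient.mk_add, ← Submodule.Quotient.mk_sub]
          exact (Submodule.Quotient.mk_eq_zero _).2 (hD ▸ ⟨r * (s * t), rfl⟩)
        have key : (Submodule.Quotient.mk (r • KaehlerDifferential.D ℂ R (s * t)) : QAux R) =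
            Submodule.Quotient.mk ((r * s) • KaehlerDifferential.D ℂ R t) -
            Submodule.Quotient.mk (s • KaehlerDifferential.D ℂ R (r * t)) :=
          eq_sub_of_add_eq (sub_eq_zero.mp h0)
        rw [key]
        have hJ : ⁅J', J⁆ = -⁅J, J'⁆ := by rw [← lie_skew]
        rw [hJ, map_neg, LinearMap.neg_apply, neg_smul, smul_sub]
        abel

end aux

theorem central_extension_lie_algebra
    (g : Type*) [LieRing g] [LieAlgebra ℂ g]
    (R : Type*) [CommRing R] [Algebra ℂ R]
    (B : g →ₗ[ℂ] g →ₗ[ℂ] ℂ)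
    (hsymm : ∀ X Y : g, B X Y = B Y X)
    (hinv : ∀ X Y Z : g, B ⁅X, Y⁆ Z = B X ⁅Y, Z⁆) :
    ∃ b : ((R ⊗[ℂ] g) × (KaehlerDifferential ℂ R ⧸
            LinearMap.range (KaehlerDifferential.D ℂ R).toLinearMap)) →ₗ[ℂ]
          ((R ⊗[ℂ] g) × (KaehlerDifferential ℂ R ⧸
            LinearMap.range (KaehlerDifferential.D ℂ R).toLinearMap)) →ₗ[ℂ]
          ((R ⊗[ℂ] g) × (KaehlerDifferential ℂ R ⧸
            LinearMap.range (KaehlerDifferential.D ℂ R).toLinearMap)),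
      -- it is a Lie bracket:
      (∀ x, b x x = 0) ∧
      (∀ x y z, b x (b y z) = b (b x y) z + b y (b x z)) ∧
      -- its value on generators (in particular the second summand is central):
      (∀ (J J' : g) (r s : R) (ω ω' : KaehlerDifferential ℂ R ⧸
            LinearMap.range (KaehlerDifferential.D ℂ R).toLinearMap),
        b (r ⊗ₜ J, ω) (s ⊗ₜ J', ω')
          = ((r * s) ⊗ₜ ⁅J, J'⁆,
             Submodule.Quotient.mk ((B J J') • (r • (KaehlerDifferential.D ℂ R) s)))) := by
  refine ⟨LinearMap.mk₂ ℂ (fun p q => (⁅p.1, q.1⁆, cAux g R B p.1 q.1))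
      (fun p p' q => by simp [Prod.ext_iff, add_lie])
      (fun a p q => by
        refine Prod.ext ?_ (by simp)
        show ⁅(a • p).1, q.1⁆ = (a • (⁅p.1, q.1⁆, cAux g R B p.1 q.1)).1
        simp only [Prod.smul_fst]
        rw [← algebraMap_smul R a p.1, smul_lie, algebraMap_smul])
      (fun p q q' => by simp [Prod.ext_iff, lie_add])
      (fun a p q => by
        refine Prod.ext ?_ (by simp)
        show ⁅p.1, (a • q).1⁆ = (a • (⁅p.1, q.1⁆, cAux g R B p.1 q.1)).1
        simp only [Prod.smul_fst]
        rw [← algebraMap_smul R a q.1, lie_smul, algebraMap_smul]), ?_, ?_, ?_⟩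
  · intro x
    simp [Prod.ext_iff, cAux_self g R B hsymm]
  · intro x y z
    simp only [LinearMap.mk₂_apply, Prod.mk_add_mk, Prod.ext_iff]
    exact ⟨leibniz_lie _ _ _, cAux_cocycle g R B hinv x.1 y.1 z.1⟩
  · intro J J' r s ω ω'
    simp only [LinearMap.mk₂_apply, LieAlgebra.ExtendScalars.bracket_tmul, cAux_tmul,
      Submodule.Quotient.mk_smul]
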